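/- For every integer m ≥ 1, ℓ_{2m}^m = 2^{2(m-1)}((m-1)!)², where ℓ_N^k is the constant in the identity |∇^k log|x||² = ℓ_N^k/|x|^{2k} in ℝ^N with N = 2m. -/

import Mathlib

open Real Finset

noncomputable section

/-- The falling factorial `(ν)_k = ∏_{j=0}^{k-1} (ν - j)` for real `ν`. -/
def fallingReal (ν : ℝ) (k : ℕ) : ℝ := ∏ j ∈ Finset.range k, (ν - (j : ℝ))

/-- The Morii–Sato–Sawano constant `ℓ_N^m` in the identity
`|∇^m log|x||² = ℓ_N^m / |x|^{2m}`. -/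
def ellConst (N m : ℕ) : ℝ :=
  (Nat.factorial m : ℝ) *
    ∑ l ∈ Finset.range (m / 2 + 1),
      (Nat.factorial (m - 2 * l) : ℝ) * (Nat.factorial l : ℝ) *
        fallingReal (((N : ℝ) - 3) / 2 + l) l *
        (∑ n ∈ Finset.Icc ((m + 1) / 2) (m - l),
          (2 : ℝ) ^ (2 * n + l - m) * ((-1 : ℝ) ^ n / (2 * n)) *
            (n.choose (m - n) : ℝ) * ((m - n).choose l : ℝ)) ^ 2

-- summand (extended form, with division instead of truncated-sub exponent)
def cc (m l n : ℕ) : ℝ :=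
  ((-1 : ℝ) ^ n / (2 * n)) * ((2:ℝ) ^ (2*n+l) / 2 ^ m) *
    (n.choose (m - n) : ℝ) * ((m - n).choose l : ℝ)

def SS (m l : ℕ) : ℝ := ∑ n ∈ Finset.Icc 1 m, cc m l n

def GG (m l n : ℕ) : ℝ :=
  if n ≤ m + 1 then
    (-1 : ℝ) ^ (n+1) * ((2:ℝ) ^ (2*n+l) / 2 ^ (m+2)) *
      ((n-1).choose (m+1-n) : ℝ) * ((m+1-n).choose l : ℝ)
  else 0

-- ℝ-cast choose helpers
lemma h1 (n k : ℕ) (hn : 1 ≤ n) :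
    (n : ℝ) * ((n-1).choose (k+1) : ℝ) = ((n:ℝ) - k - 1) * (n.choose (k+1) : ℝ) := by
  rcases le_or_gt n (k+1) with h | h
  · rcases eq_or_lt_of_le h with rfl | h'
    · rw [Nat.choose_eq_zero_of_lt (by omega : k+1-1 < k+1), Nat.choose_self]
      push_cast; ring
    · rw [Nat.choose_eq_zero_of_lt (by omega : n-1 < k+1), Nat.choose_eq_zero_of_lt h']
      simp
  · have := Nat.choose_mul_succ_eq (n-1) (k+1)
    have h2 : n - 1 + 1 = n := by omega
    rw [h2] at this
    have := congrArg (fun x : ℕ => (x : ℝ)) this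
    push_cast at this
    rw [Nat.cast_sub (by omega : k+1 ≤ n)] at this
    push_cast at this
    linarith [this]

lemma h2 (n k : ℕ) :
    ((n:ℝ) - k) * (n.choose k : ℝ) = ((k:ℝ) + 1) * (n.choose (k+1) : ℝ) := by
  rcases le_or_gt k n with h | h
  · have := Nat.choose_succ_right_eq n k
    have := congrArg (fun x : ℕ => (x : ℝ)) this
    push_cast [Nat.cast_sub h] at this
    linarith [this]
  · rw [Nat.choose_eq_zero_of_lt h, Nat.choose_eq_zero_of_lt (by omega)]
    simp

lemma h3 (k l : ℕ) :
    ((k:ℝ) + 1 - l) * ((k+1).choose l : ℝ) = ((k:ℝ) + 1) * (k.choose l : ℝ) := by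
  rcases le_or_gt l (k+1) with h | h
  · have := Nat.choose_mul_succ_eq k l
    have := congrArg (fun x : ℕ => (x : ℝ)) this
    push_cast [Nat.cast_sub h] at this
    linarith [this]
  · rw [Nat.choose_eq_zero_of_lt h, Nat.choose_eq_zero_of_lt (by omega)]
    simp

lemma keyZ (n k l : ℕ) (hn : 1 ≤ n) :
    ((n:ℝ)+k+1-2*l) * (n.choose (k+1)) * ((k+1).choose l) + 2*((n:ℝ)+k) * (n.choose k) * (k.choose l)
      = 4*(n:ℝ) * (n.choose k) * (k.choose l) + (n:ℝ) * ((n-1).choose (k+1)) * ((k+1).choose l) := by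
  linear_combination (-(((k+1).choose l : ℝ))) * h1 n k hn + (-2*((k.choose l : ℝ))) * h2 n k
    + (2*((n.choose (k+1) : ℝ))) * h3 k l

lemma perTerm (m l n : ℕ) (hm : 1 ≤ m) (hn1 : 1 ≤ n) (hn : n ≤ m + 1) :
    ((m:ℝ) + 1 - 2*l) * cc (m+1) l n + (if n ≤ m then (m:ℝ) * cc m l n else 0)
      = GG m l (n+1) - GG m l n := by
  rcases le_or_gt n m with h | h
  · obtain ⟨k, rfl⟩ : ∃ k, m = n + k := ⟨m - n, by omega⟩
    rw [if_pos h]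
    unfold cc GG
    rw [if_pos (by omega : n + 1 ≤ n + k + 1), if_pos (by omega : n ≤ n + k + 1)]
    rw [show n + k + 1 - n = k + 1 from by omega, show n + k - n = k from by omega,
        show n + k + 1 - (n+1) = k from by omega]
    have hn0 : (n:ℝ) ≠ 0 := by positivity
    have key := keyZ n k l hn1
    simp only [show n + 1 - 1 = n from by omega]
    push_cast
    field_simp
    linear_combination ((-1:ℝ)^n * 2^(4*n) * 2^l * 2^(2*k) * 4) * key
  · have hnm : n = m + 1 := by omega
    subst hnm
    rw [if_neg (by omega)]
    unfold cc GG
    rw [if_neg (by omega : ¬ (m+1+1 ≤ m+1)), if_pos (le_refl (m+1))]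
    simp only [show m+1-1 = m from by omega, show m + 1 - (m+1) = 0 from by omega]
    rcases Nat.eq_zero_or_pos l with rfl | hl
    · simp only [Nat.choose_zero_right, Nat.choose_self, Nat.cast_one]
      have : ((m:ℝ)+1) ≠ 0 := by positivity
      field_simp
      push_cast
      ring
    · rw [Nat.choose_eq_zero_of_lt (by omega : 0 < l)]
      simp

lemma GG_one (m l : ℕ) (hm : 1 ≤ m) : GG m l 1 = 0 := by
  unfold GG
  rw [if_pos (by omega : 1 ≤ m+1), show (1:ℕ)-1 = 0 from rfl, show m+1-1 = m from rfl,
    Nat.choose_eq_zero_of_lt hm]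
  simp

lemma GG_top (m l : ℕ) : GG m l (m+2) = 0 := by
  unfold GG
  rw [if_neg (by omega)]

lemma recur (m l : ℕ) (hm : 1 ≤ m) :
    ((m:ℝ) + 1 - 2*l) * SS (m+1) l + (m:ℝ) * SS m l = 0 := by
  have h1 : ∑ n ∈ Finset.Icc 1 (m+1),
      (((m:ℝ) + 1 - 2*l) * cc (m+1) l n + (if n ≤ m then (m:ℝ) * cc m l n else 0))
      = ∑ n ∈ Finset.Icc 1 (m+1), (GG m l (n+1) - GG m l n) := by
    apply Finset.sum_congr rfl
    intro n hn
    simp only [Finset.mem_Icc] at hn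
    exact perTerm m l n hm hn.1 hn.2
  rw [Finset.sum_add_distrib, ← Finset.mul_sum] at h1
  have h2 : ∑ n ∈ Finset.Icc 1 (m+1), (if n ≤ m then (m:ℝ) * cc m l n else 0)
      = (m:ℝ) * SS m l := by
    rw [show ((m:ℝ) * SS m l) = ∑ n ∈ Finset.Icc 1 m, (if n ≤ m then (m:ℝ) * cc m l n else 0) from ?_]
    · symm
      apply Finset.sum_subset
      · apply Finset.Icc_subset_Icc_right; omega
      · intro x hx hx'
        simp only [Finset.mem_Icc] at hx hx'
        rw [if_neg (by omega)]
    · rw [SS, Finset.mul_sum]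
      apply Finset.sum_congr rfl
      intro n hn
      simp only [Finset.mem_Icc] at hn
      rw [if_pos hn.2]
  have h3 : ∑ n ∈ Finset.Icc 1 (m+1), (GG m l (n+1) - GG m l n) = 0 := by
    rw [show Finset.Icc 1 (m+1) = Finset.map ⟨fun i => i + 1, add_left_injective 1⟩ (Finset.range (m+1)) from ?_]
    · rw [Finset.sum_map]
      simp only [Function.Embedding.coeFn_mk]
      rw [Finset.sum_range_sub (f := fun i => GG m l (i+1))]
      rw [GG_top, GG_one m l hm, sub_zero]
    · ext x
      simp only [Finset.mem_Icc, Finset.mem_map, Finset.mem_range, Function.Embedding.coeFn_mk]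
      constructor
      · intro h; exact ⟨x - 1, by omega, by omega⟩
      · rintro ⟨a, ha, rfl⟩; omega
  rw [h2, h3] at h1
  rw [← h1, SS]

def closedS (m l : ℕ) : ℝ :=
  (-1:ℝ)^(m+l) * 2^l * ((m-1).factorial : ℝ) / (((2*l).factorial : ℝ) * ((m - 2*l).factorial : ℝ))

lemma SS_edge (l : ℕ) (hl : 1 ≤ l) : SS (2*l) l = closedS (2*l) l := by
  rw [SS, Finset.sum_eq_single_of_mem l (by simp only [Finset.mem_Icc]; omega)]
  · unfold cc closedS
    rw [show 2*l - l = l from by omega, Nat.choose_self,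
        show 2*l - 2*l = 0 from by omega, Nat.factorial_zero,
        show (2*l).factorial = (2*l) * (2*l-1).factorial from (Nat.mul_factorial_pred (by omega)).symm]
    have hs : (-1:ℝ)^(2*l+l) = (-1)^l := by rw [pow_add, pow_mul]; norm_num
    rw [hs]
    have hl0 : ((l:ℝ)) ≠ 0 := by positivity
    have hf : (((2*l-1).factorial : ℕ) : ℝ) ≠ 0 := by positivity
    push_cast
    field_simp
    ring
  · intro n hn hne
    simp only [Finset.mem_Icc] at hn
    rcases lt_or_gt_of_ne hne with h | h
    · rw [cc, Nat.choose_eq_zero_of_lt (by omega : n < 2*l - n)]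
      simp
    · rw [cc, Nat.choose_eq_zero_of_lt (by omega : 2*l - n < l)]
      simp

lemma SS_closed : ∀ m, 1 ≤ m → ∀ l, 2*l ≤ m → SS m l = closedS m l := by
  intro m hm
  induction m, hm using Nat.le_induction with
  | base =>
    intro l hl
    have hl0 : l = 0 := by omega
    subst hl0
    rw [SS, show Finset.Icc 1 1 = {1} from rfl, Finset.sum_singleton]
    unfold cc closedS
    norm_num [Nat.factorial]
  | succ m hm ih =>
    intro l hl
    rcases le_or_gt (2*l) m with h | h
    · have hr := recur m l hm
      rw [ih l h] at hr
      have hne : ((m:ℝ) + 1 - 2*l) ≠ 0 := by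
        have : (2*l : ℝ) ≤ m := by exact_mod_cast h
        linarith
      have hSS : SS (m+1) l = -((m:ℝ) * closedS m l) / ((m:ℝ) + 1 - 2*l) := by
        field_simp
        linarith [hr]
      rw [hSS]
      unfold closedS
      rw [show m + 1 - 1 = m from by omega,
          show m.factorial = m * (m-1).factorial from (Nat.mul_factorial_pred (by omega)).symm,
          show m + 1 - 2*l = (m - 2*l) + 1 from by omega, Nat.factorial_succ,
          pow_add, pow_add]
      have e1 : (((2*l).factorial : ℕ) : ℝ) ≠ 0 := by positivity
      have e2 : (((m - 2*l).factorial : ℕ) : ℝ) ≠ 0 := by positivity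
      have e3 : ((m:ℝ) - 2*l + 1) ≠ 0 := by
        have : (2*l : ℝ) ≤ m := by exact_mod_cast h
        linarith
      push_cast
      rw [Nat.cast_sub (by omega : 2*l ≤ m)]
      push_cast
      field_simp
      ring
    · have : m + 1 = 2*l := by omega
      rw [this]
      exact SS_edge l (by omega)

lemma inner_eq (m l : ℕ) (hm : 1 ≤ m) (hl : 2*l ≤ m) :
    (∑ n ∈ Finset.Icc ((m + 1) / 2) (m - l),
      (2 : ℝ) ^ (2 * n + l - m) * ((-1 : ℝ) ^ n / (2 * n)) *
        (n.choose (m - n) : ℝ) * ((m - n).choose l : ℝ)) = SS m l := by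
  rw [SS, ← Finset.sum_subset (Finset.Icc_subset_Icc (by omega) (by omega) :
      Finset.Icc ((m+1)/2) (m-l) ⊆ Finset.Icc 1 m)]
  · apply Finset.sum_congr rfl
    intro n hn
    simp only [Finset.mem_Icc] at hn
    have h2n : m ≤ 2*n + l := by omega
    rw [cc, pow_sub₀ (2:ℝ) two_ne_zero h2n]
    ring
  · intro n hn hn'
    simp only [Finset.mem_Icc] at hn hn'
    rcases lt_or_ge n ((m+1)/2) with h | h
    · rw [cc, Nat.choose_eq_zero_of_lt (by omega : n < m - n)]
      simp
    · rw [cc, Nat.choose_eq_zero_of_lt (by omega : m - n < l)]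
      simp

lemma fall_succ (ν : ℝ) (l : ℕ) : fallingReal (ν+1) (l+1) = (ν+1) * fallingReal ν l := by
  unfold fallingReal
  rw [Finset.prod_range_succ']
  push_cast
  rw [mul_comm]
  congr 1
  · norm_num
  · apply Finset.prod_congr rfl; intro j _; push_cast; ring

lemma fall_eval (m l : ℕ) (hm : 1 ≤ m) :
    fallingReal ((((2*m : ℕ) : ℝ) - 3)/2 + l) l
      = (((2*m+2*l-2).factorial : ℝ) * ((m-1).factorial : ℝ)) /
        (((2*m-2).factorial : ℝ) * ((m+l-1).factorial : ℝ) * 4^l) := by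
  obtain ⟨a, rfl⟩ : ∃ a, m = a + 1 := ⟨m - 1, by omega⟩
  simp only [show 2*(a+1)+2*l-2 = 2*a+2*l from by omega, show a+1-1 = a from by omega,
    show 2*(a+1)-2 = 2*a from by omega, show a+1+l-1 = a+l from by omega]
  induction l with
  | zero =>
    simp only [fallingReal, Finset.range_zero, Finset.prod_empty, Nat.cast_zero, pow_zero,
      add_zero, mul_zero]
    have : (((2*a).factorial : ℕ):ℝ) ≠ 0 := by positivity
    have : (((a).factorial : ℕ):ℝ) ≠ 0 := by positivity
    field_simp
  | succ l ih =>
    have hstep : ((((2*(a+1) : ℕ) : ℝ) - 3)/2 + (l+1 : ℕ)) = ((((2*(a+1) : ℕ) : ℝ) - 3)/2 + l) + 1 := by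
      push_cast; ring
    rw [hstep, fall_succ, ih]
    simp only [show 2*a+2*(l+1) = (2*a+2*l+1)+1 from by omega, show a+(l+1) = (a+l)+1 from by omega,
      show 2*a+2*l+1 = (2*a+2*l)+1 from by omega, Nat.factorial_succ]
    have e1 : (((2*a).factorial : ℕ):ℝ) ≠ 0 := by positivity
    have e2 : (((a+l).factorial : ℕ):ℝ) ≠ 0 := by positivity
    have e3 : (((2*a+2*l).factorial : ℕ):ℝ) ≠ 0 := by positivity
    push_cast
    field_simp
    ring

def UU (m l : ℕ) : ℝ :=
  ((m.factorial : ℝ) * (l.factorial : ℝ) * ((2*m+2*l-2).factorial : ℝ) * ((m-1).factorial : ℝ)) /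
    (((2*m-2).factorial : ℝ) * ((m+l-1).factorial : ℝ) * (((2*l).factorial : ℝ))^2 *
      ((m-2*l).factorial : ℝ))

def HH (m l : ℕ) : ℝ :=
  if 2*l ≤ m+1 then
    (-(6:ℝ) * l * (2*(l:ℝ)-1)^2 * (m.factorial : ℝ) * (l.factorial : ℝ) *
        ((2*m+2*l-2).factorial : ℝ) * ((m-1).factorial : ℝ)) /
      ((m:ℝ) * ((2*m-1 : ℕ) : ℝ) * ((2*m-2).factorial : ℝ) * ((m+l-1).factorial : ℝ) *
        (((2*l).factorial : ℝ))^2 * ((m+1-2*l).factorial : ℝ))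
  else 0

lemma HH_zero (m : ℕ) : HH m 0 = 0 := by
  unfold HH
  split_ifs <;> simp

set_option maxHeartbeats 4000000 in
lemma perL (m l : ℕ) (hm : 1 ≤ m) (hl : 2*l ≤ m) :
    UU (m+1) l - 4 * UU m l = HH m (l+1) - HH m l := by
  rcases lt_or_eq_of_le hl with h | h
  · obtain ⟨b, rfl⟩ : ∃ b, m = 2*l + b + 1 := ⟨m - 2*l - 1, by omega⟩
    unfold UU HH
    rw [if_pos (by omega), if_pos (by omega)]
    simp only [show 2*(2*l+b+1+1)+2*l-2 = 6*l+2*b+2 from by omega,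
      show 2*l+b+1+1-1 = 2*l+b+1 from by omega,
      show 2*(2*l+b+1+1)-2 = 4*l+2*b+2 from by omega,
      show 2*l+b+1+1+l-1 = 3*l+b+1 from by omega,
      show 2*l+b+1+1-2*l = b+2 from by omega,
      show 2*(2*l+b+1)+2*l-2 = 6*l+2*b from by omega,
      show 2*l+b+1-1 = 2*l+b from by omega,
      show 2*(2*l+b+1)-2 = 4*l+2*b from by omega,
      show 2*l+b+1+l-1 = 3*l+b from by omega,
      show 2*l+b+1-2*l = b+1 from by omega,
      show 2*l+b+1+1-2*(l+1) = b from by omega,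
      show 2*l+b+1+1-2*l = b+2 from by omega,
      show 2*l+b+1+(l+1)-1 = 3*l+b+1 from by omega,
      show 2*(2*l+b+1)+2*(l+1)-2 = 6*l+2*b+2 from by omega,
      show 2*(2*l+b+1)-1 = 4*l+2*b+1 from by omega]
    simp only [show 2*l+b+1+1 = 2*l+b+2 from by omega]
    have f1 : (((b+2).factorial : ℕ) : ℝ) = ((b:ℝ)+2)*((b:ℝ)+1)*(b.factorial : ℝ) := by
      rw [Nat.factorial_succ, Nat.factorial_succ]; push_cast; ring
    have f2 : (((b+1).factorial : ℕ) : ℝ) = ((b:ℝ)+1)*(b.factorial : ℝ) := by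
      rw [Nat.factorial_succ]; push_cast; ring
    have f3 : (((2*l+b+1).factorial : ℕ) : ℝ) = (2*(l:ℝ)+(b:ℝ)+1)*((2*l+b).factorial : ℝ) := by
      rw [show 2*l+b+1 = (2*l+b)+1 from by omega, Nat.factorial_succ]; push_cast; ring
    have f4 : (((2*l+b+2).factorial : ℕ) : ℝ) = (2*(l:ℝ)+(b:ℝ)+2)*(2*(l:ℝ)+(b:ℝ)+1)*((2*l+b).factorial : ℝ) := by
      rw [show 2*l+b+2 = (2*l+b+1)+1 from by omega, Nat.factorial_succ]; push_cast [f3]; ring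
    have f5 : (((3*l+b+1).factorial : ℕ) : ℝ) = (3*(l:ℝ)+(b:ℝ)+1)*((3*l+b).factorial : ℝ) := by
      rw [show 3*l+b+1 = (3*l+b)+1 from by omega, Nat.factorial_succ]; push_cast; ring
    have f6 : (((4*l+2*b+2).factorial : ℕ) : ℝ)
        = (4*(l:ℝ)+2*(b:ℝ)+2)*(4*(l:ℝ)+2*(b:ℝ)+1)*((4*l+2*b).factorial : ℝ) := by
      rw [show 4*l+2*b+2 = (4*l+2*b+1)+1 from by omega, Nat.factorial_succ,
        show 4*l+2*b+1 = (4*l+2*b)+1 from by omega, Nat.factorial_succ]; push_cast; ring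
    have f7 : (((6*l+2*b+2).factorial : ℕ) : ℝ)
        = (6*(l:ℝ)+2*(b:ℝ)+2)*(6*(l:ℝ)+2*(b:ℝ)+1)*((6*l+2*b).factorial : ℝ) := by
      rw [show 6*l+2*b+2 = (6*l+2*b+1)+1 from by omega, Nat.factorial_succ,
        show 6*l+2*b+1 = (6*l+2*b)+1 from by omega, Nat.factorial_succ]; push_cast; ring
    have f8 : (((2*(l+1)).factorial : ℕ) : ℝ) = (2*(l:ℝ)+2)*(2*(l:ℝ)+1)*((2*l).factorial : ℝ) := by
      rw [show 2*(l+1) = (2*l+1)+1 from by omega, Nat.factorial_succ,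
        show 2*l+1 = (2*l)+1 from by omega, Nat.factorial_succ]; push_cast; ring
    have f9 : (((l+1).factorial : ℕ) : ℝ) = ((l:ℝ)+1)*(l.factorial : ℝ) := by
      rw [Nat.factorial_succ]; push_cast; ring
    rw [f1, f2, f3, f4, f5, f6, f7, f8, f9]
    have e1 : ((b.factorial : ℕ) : ℝ) ≠ 0 := by positivity
    have e2 : (((2*l).factorial : ℕ) : ℝ) ≠ 0 := by positivity
    have e3 : ((l.factorial : ℕ) : ℝ) ≠ 0 := by positivity
    have e4 : (((2*l+b).factorial : ℕ) : ℝ) ≠ 0 := by positivity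
    have e5 : (((4*l+2*b).factorial : ℕ) : ℝ) ≠ 0 := by positivity
    have e6 : (((3*l+b).factorial : ℕ) : ℝ) ≠ 0 := by positivity
    have e7 : (((6*l+2*b).factorial : ℕ) : ℝ) ≠ 0 := by positivity
    have g1 : ((b:ℝ)+1) ≠ 0 := by positivity
    have g2 : ((b:ℝ)+2) ≠ 0 := by positivity
    have g3 : (2*(l:ℝ)+(b:ℝ)+1) ≠ 0 := by positivity
    have g4 : (2*(l:ℝ)+(b:ℝ)+2) ≠ 0 := by positivity
    have g5 : (3*(l:ℝ)+(b:ℝ)+1) ≠ 0 := by positivity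
    have g6 : (4*(l:ℝ)+2*(b:ℝ)+1) ≠ 0 := by positivity
    have g7 : (4*(l:ℝ)+2*(b:ℝ)+2) ≠ 0 := by positivity
    have g8 : (6*(l:ℝ)+2*(b:ℝ)+1) ≠ 0 := by positivity
    have g9 : (6*(l:ℝ)+2*(b:ℝ)+2) ≠ 0 := by positivity
    have g10 : (2*(l:ℝ)+1) ≠ 0 := by positivity
    have g11 : (2*(l:ℝ)+2) ≠ 0 := by positivity
    have g12 : ((l:ℝ)+1) ≠ 0 := by positivity
    push_cast
    field_simp
    ring
  · obtain ⟨t, rfl⟩ : ∃ t, m = 2*t + 2 := ⟨l - 1, by omega⟩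
    have hlt : l = t + 1 := by omega
    subst hlt
    unfold UU HH
    rw [if_neg (by omega), if_pos (by omega)]
    simp only [show 2*(2*t+2+1)+2*(t+1)-2 = 6*t+6 from by omega,
      show 2*t+2+1-1 = 2*t+2 from by omega,
      show 2*(2*t+2+1)-2 = 4*t+4 from by omega,
      show 2*t+2+1+(t+1)-1 = 3*t+3 from by omega,
      show 2*t+2+1-2*(t+1) = 1 from by omega,
      show 2*(2*t+2)+2*(t+1)-2 = 6*t+4 from by omega,
      show 2*t+2-1 = 2*t+1 from by omega,
      show 2*(2*t+2)-2 = 4*t+2 from by omega,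
      show 2*t+2+(t+1)-1 = 3*t+2 from by omega,
      show 2*t+2-2*(t+1) = 0 from by omega,
      show 2*(2*t+2)-1 = 4*t+3 from by omega]
    simp only [show 2*t+2+1 = 2*t+3 from by omega]
    have f1 : (((2*t+2).factorial : ℕ) : ℝ) = (2*(t:ℝ)+2)*((2*t+1).factorial : ℝ) := by
      rw [show 2*t+2 = (2*t+1)+1 from by omega, Nat.factorial_succ]; push_cast; ring
    have f2 : (((2*t+3).factorial : ℕ) : ℝ) = (2*(t:ℝ)+3)*(2*(t:ℝ)+2)*((2*t+1).factorial : ℝ) := by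
      rw [show 2*t+3 = (2*t+2)+1 from by omega, Nat.factorial_succ]; push_cast [f1]; ring
    have f3 : (((6*t+6).factorial : ℕ) : ℝ) = (6*(t:ℝ)+6)*(6*(t:ℝ)+5)*((6*t+4).factorial : ℝ) := by
      rw [show 6*t+6 = (6*t+5)+1 from by omega, Nat.factorial_succ,
        show 6*t+5 = (6*t+4)+1 from by omega, Nat.factorial_succ]; push_cast; ring
    have f4 : (((4*t+4).factorial : ℕ) : ℝ) = (4*(t:ℝ)+4)*(4*(t:ℝ)+3)*((4*t+2).factorial : ℝ) := by
      rw [show 4*t+4 = (4*t+3)+1 from by omega, Nat.factorial_succ,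
        show 4*t+3 = (4*t+2)+1 from by omega, Nat.factorial_succ]; push_cast; ring
    have f5 : (((3*t+3).factorial : ℕ) : ℝ) = (3*(t:ℝ)+3)*((3*t+2).factorial : ℝ) := by
      rw [show 3*t+3 = (3*t+2)+1 from by omega, Nat.factorial_succ]; push_cast; ring
    have f6 : (((2*(t+1)).factorial : ℕ) : ℝ) = (2*(t:ℝ)+2)*((2*t+1).factorial : ℝ) := by
      rw [show 2*(t+1) = (2*t+1)+1 from by omega, Nat.factorial_succ]; push_cast; ring
    rw [f2, f3, f4, f5, f6, f1]
    have e1 : (((2*t+1).factorial : ℕ) : ℝ) ≠ 0 := by positivity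
    have e2 : (((t+1).factorial : ℕ) : ℝ) ≠ 0 := by positivity
    have e3 : (((6*t+4).factorial : ℕ) : ℝ) ≠ 0 := by positivity
    have e4 : (((4*t+2).factorial : ℕ) : ℝ) ≠ 0 := by positivity
    have e5 : (((3*t+2).factorial : ℕ) : ℝ) ≠ 0 := by positivity
    have g1 : (2*(t:ℝ)+1) ≠ 0 := by positivity
    have g2 : (2*(t:ℝ)+2) ≠ 0 := by positivity
    have g3 : (2*(t:ℝ)+3) ≠ 0 := by positivity
    have g4 : (3*(t:ℝ)+2) ≠ 0 := by positivity
    have g5 : (3*(t:ℝ)+3) ≠ 0 := by positivity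
    have g6 : (4*(t:ℝ)+2) ≠ 0 := by positivity
    have g7 : (4*(t:ℝ)+3) ≠ 0 := by positivity
    have g8 : (4*(t:ℝ)+4) ≠ 0 := by positivity
    have g9 : (6*(t:ℝ)+4) ≠ 0 := by positivity
    have g10 : (6*(t:ℝ)+5) ≠ 0 := by positivity
    have g11 : (6*(t:ℝ)+6) ≠ 0 := by positivity
    have g12 : ((t:ℝ)+1) ≠ 0 := by positivity
    push_cast
    field_simp
    ring

set_option maxHeartbeats 1000000 in
lemma UU_edge (r : ℕ) : UU (2*r+2) (r+1) = - HH (2*r+1) (r+1) := by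
  unfold UU HH
  rw [if_pos (by omega)]
  simp only [show 2*(2*r+2)+2*(r+1)-2 = 6*r+4 from by omega,
    show 2*r+2-1 = 2*r+1 from by omega,
    show 2*(2*r+2)-2 = 4*r+2 from by omega,
    show 2*r+2+(r+1)-1 = 3*r+2 from by omega,
    show 2*r+2-2*(r+1) = 0 from by omega,
    show 2*(2*r+1)+2*(r+1)-2 = 6*r+2 from by omega,
    show 2*r+1-1 = 2*r from by omega,
    show 2*(2*r+1)-2 = 4*r from by omega,
    show 2*r+1+(r+1)-1 = 3*r+1 from by omega,
    show 2*r+1+1-2*(r+1) = 0 from by omega,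
    show 2*(2*r+1)-1 = 4*r+1 from by omega]
  have f1 : (((2*r+1).factorial : ℕ) : ℝ) = (2*(r:ℝ)+1)*((2*r).factorial : ℝ) := by
    rw [show 2*r+1 = (2*r)+1 from by omega, Nat.factorial_succ]; push_cast; ring
  have f2 : (((2*r+2).factorial : ℕ) : ℝ) = (2*(r:ℝ)+2)*(2*(r:ℝ)+1)*((2*r).factorial : ℝ) := by
    rw [show 2*r+2 = (2*r+1)+1 from by omega, Nat.factorial_succ]; push_cast [f1]; ring
  have f3 : (((6*r+4).factorial : ℕ) : ℝ) = (6*(r:ℝ)+4)*(6*(r:ℝ)+3)*((6*r+2).factorial : ℝ) := by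
    rw [show 6*r+4 = (6*r+3)+1 from by omega, Nat.factorial_succ,
      show 6*r+3 = (6*r+2)+1 from by omega, Nat.factorial_succ]; push_cast; ring
  have f4 : (((4*r+2).factorial : ℕ) : ℝ) = (4*(r:ℝ)+2)*(4*(r:ℝ)+1)*((4*r).factorial : ℝ) := by
    rw [show 4*r+2 = (4*r+1)+1 from by omega, Nat.factorial_succ,
      show 4*r+1 = (4*r)+1 from by omega, Nat.factorial_succ]; push_cast; ring
  have f5 : (((3*r+2).factorial : ℕ) : ℝ) = (3*(r:ℝ)+2)*((3*r+1).factorial : ℝ) := by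
    rw [show 3*r+2 = (3*r+1)+1 from by omega, Nat.factorial_succ]; push_cast; ring
  have f6 : (((2*(r+1)).factorial : ℕ) : ℝ) = (2*(r:ℝ)+2)*(2*(r:ℝ)+1)*((2*r).factorial : ℝ) := by
    rw [show 2*(r+1) = (2*r+1)+1 from by omega, Nat.factorial_succ]; push_cast [f1]; ring
  rw [f2, f3, f4, f5, f6, f1]
  have e1 : (((2*r).factorial : ℕ) : ℝ) ≠ 0 := by positivity
  have e2 : (((r+1).factorial : ℕ) : ℝ) ≠ 0 := by positivity
  have e3 : (((6*r+2).factorial : ℕ) : ℝ) ≠ 0 := by positivity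
  have e4 : (((4*r).factorial : ℕ) : ℝ) ≠ 0 := by positivity
  have e5 : (((3*r+1).factorial : ℕ) : ℝ) ≠ 0 := by positivity
  have g1 : (2*(r:ℝ)+1) ≠ 0 := by positivity
  have g2 : (2*(r:ℝ)+2) ≠ 0 := by positivity
  have g3 : (3*(r:ℝ)+2) ≠ 0 := by positivity
  have g4 : (4*(r:ℝ)+1) ≠ 0 := by positivity
  have g5 : (4*(r:ℝ)+2) ≠ 0 := by positivity
  have g6 : (6*(r:ℝ)+3) ≠ 0 := by positivity
  have g7 : (6*(r:ℝ)+4) ≠ 0 := by positivity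
  have g8 : ((r:ℝ)+1) ≠ 0 := by positivity
  push_cast
  field_simp
  ring

lemma Usum : ∀ m, 1 ≤ m → ∑ l ∈ Finset.range (m/2+1), UU m l = 4^(m-1) := by
  intro m hm
  induction m, hm using Nat.le_induction with
  | base =>
    norm_num [UU, Nat.factorial]
  | succ m hm ih =>
    have key : ∀ l ∈ Finset.range (m/2+1), UU (m+1) l - 4 * UU m l = HH m (l+1) - HH m l := by
      intro l hl
      simp only [Finset.mem_range] at hl
      exact perL m l hm (by omega)
    rcases Nat.even_or_odd m with ⟨r, hr⟩ | ⟨r, hr⟩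
    · have hmr : m = 2*r := by omega
      subst hmr
      have hr2 : 2*r/2 = r := by omega
      rw [hr2] at ih key
      have h1 : ∑ l ∈ Finset.range (r+1), (UU (2*r+1) l - 4 * UU (2*r) l)
          = ∑ l ∈ Finset.range (r+1), (HH (2*r) (l+1) - HH (2*r) l) :=
        Finset.sum_congr rfl key
      rw [Finset.sum_sub_distrib, ← Finset.mul_sum] at h1
      rw [Finset.sum_range_sub (f := HH (2*r))] at h1
      rw [show HH (2*r) (r+1) = 0 from by unfold HH; rw [if_neg (by omega)], HH_zero] at h1
      rw [show (2*r+1)/2 + 1 = r + 1 from by omega,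
        show 2*r+1-1 = 2*r-1+1 from by omega, pow_succ, ← ih]
      linarith [h1]
    · have hmr : m = 2*r+1 := by omega
      subst hmr
      have hrange : (2*r+1+1)/2 + 1 = r + 2 := by omega
      rw [hrange, Finset.sum_range_succ]
      have h1 : ∑ l ∈ Finset.range ((2*r+1)/2+1), (UU (2*r+1+1) l - 4 * UU (2*r+1) l)
          = ∑ l ∈ Finset.range ((2*r+1)/2+1), (HH (2*r+1) (l+1) - HH (2*r+1) l) :=
        Finset.sum_congr rfl key
      rw [Finset.sum_sub_distrib, ← Finset.mul_sum] at h1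
      rw [Finset.sum_range_sub (f := HH (2*r+1))] at h1
      rw [show (2*r+1)/2 = r from by omega] at h1
      rw [HH_zero, sub_zero] at h1
      have h2 : UU (2*r+1+1) (r+1) = - HH (2*r+1) (r+1) := by
        rw [show 2*r+1+1 = 2*r+2 from by omega]; exact UU_edge r
      rw [show (2*r+1)/2 = r from by omega] at ih
      rw [ih] at h1
      rw [h2]
      rw [show 2*r+1+1-1 = (2*r+1-1)+1 from by omega, pow_succ]
      linarith [h1]

set_option maxHeartbeats 1000000 in
theorem ellConst_two_m (m : ℕ) (hm : 1 ≤ m) :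
    ellConst (2 * m) m = 2 ^ (2 * (m - 1)) * (Nat.factorial (m - 1) : ℝ) ^ 2 := by
  unfold ellConst
  have hterm : ∀ l ∈ Finset.range (m/2+1),
      (Nat.factorial (m - 2 * l) : ℝ) * (Nat.factorial l : ℝ) *
        fallingReal ((((2*m : ℕ)) - 3 : ℝ) / 2 + l) l *
        (∑ n ∈ Finset.Icc ((m + 1) / 2) (m - l),
          (2 : ℝ) ^ (2 * n + l - m) * ((-1 : ℝ) ^ n / (2 * n)) *
            (n.choose (m - n) : ℝ) * ((m - n).choose l : ℝ)) ^ 2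
      = ((m-1).factorial : ℝ)^2 / (m.factorial : ℝ) * UU m l := by
    intro l hl
    simp only [Finset.mem_range] at hl
    have h2l : 2*l ≤ m := by omega
    rw [inner_eq m l hm h2l, SS_closed m hm l h2l, fall_eval m l hm]
    unfold closedS UU
    have hsgn : ((-1:ℝ)^(m+l))^2 = 1 := by
      rw [← pow_mul, mul_comm, pow_mul]; norm_num
    rw [div_pow, mul_pow, mul_pow, hsgn, one_mul]
    have h4 : (4:ℝ)^l = 2^l * 2^l := by
      rw [show (4:ℝ) = 2*2 from by norm_num, mul_pow]
    rw [h4]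
    have e1 : (((2*l).factorial : ℕ) : ℝ) ≠ 0 := by positivity
    have e2 : (((m-2*l).factorial : ℕ) : ℝ) ≠ 0 := by positivity
    have e3 : (((2*m-2).factorial : ℕ) : ℝ) ≠ 0 := by positivity
    have e4 : (((m+l-1).factorial : ℕ) : ℝ) ≠ 0 := by positivity
    have e5 : ((m.factorial : ℕ) : ℝ) ≠ 0 := by positivity
    have e6 : ((2:ℝ)^l) ≠ 0 := by positivity
    field_simp
  rw [Finset.sum_congr rfl hterm, ← Finset.mul_sum, Usum m hm]
  have e5 : ((m.factorial : ℕ) : ℝ) ≠ 0 := by positivity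
  have h4 : (4:ℝ)^(m-1) = 2^(2*(m-1)) := by
    rw [pow_mul]; norm_num
  field_simp [h4]
  linear_combination h4
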